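/- For every θ > 0 and every real t with t < θ, the moment generating function of the i-Garima distribution satisfies ∫₀^∞ e^{tx} · (θ/(θ+3))·(2+θ+θx)·e^{-θx} dx = [1 − (2+θ)t/((3+θ)θ)] · (1 − t/θ)^{-2}. -/

import Mathlib

open Real Set MeasureTheory

lemma exp_int_one {r : ℝ} (hr : 0 < r) :
    ∫ x in Ioi (0:ℝ), Real.exp (-(r * x)) = 1 / r := by
  have h := Real.integral_rpow_mul_exp_neg_mul_Ioi (a := 1) one_pos hr
  simpa using h

lemma exp_int_two {r : ℝ} (hr : 0 < r) :
    ∫ x in Ioi (0:ℝ), x * Real.exp (-(r * x)) = 1 / r ^ 2 := by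
  have h := Real.integral_rpow_mul_exp_neg_mul_Ioi (a := 2) two_pos hr
  rw [show (2:ℝ) - 1 = 1 by norm_num] at h
  simp only [Real.rpow_one, Real.Gamma_two, mul_one] at h
  rw [h, div_rpow (by norm_num) hr.le, Real.one_rpow, Real.rpow_two]

lemma integrable_exp' {r : ℝ} (hr : 0 < r) :
    IntegrableOn (fun x : ℝ => Real.exp (-(r * x))) (Ioi 0) := by
  simpa [neg_mul] using exp_neg_integrableOn_Ioi 0 hr

lemma integrable_x_exp {r : ℝ} (hr : 0 < r) :
    IntegrableOn (fun x : ℝ => x * Real.exp (-(r * x))) (Ioi 0) := by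
  have h := integrableOn_rpow_mul_exp_neg_mul_rpow (p := 1) (s := 1) (b := r)
      (by norm_num) one_pos hr
  refine h.congr_fun (fun x hx => ?_) measurableSet_Ioi
  simp [Real.rpow_one, neg_mul]

theorem iGarima_mgf (θ : ℝ) (hθ : 0 < θ) (t : ℝ) (ht : t < θ) :
    ∫ x in Set.Ioi (0 : ℝ),
        Real.exp (t * x) * ((θ / (θ + 3)) * (2 + θ + θ * x) * Real.exp (-θ * x))
      = (1 - (2 + θ) * t / ((3 + θ) * θ)) * (1 - t / θ) ^ (-2 : ℤ) := by
  set r := θ - t with hr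
  have hrpos : 0 < r := sub_pos.2 ht
  have key : ∀ x ∈ Ioi (0:ℝ),
      Real.exp (t * x) * ((θ / (θ + 3)) * (2 + θ + θ * x) * Real.exp (-θ * x))
      = (θ / (θ + 3) * (2 + θ)) * Real.exp (-(r * x))
        + (θ / (θ + 3) * θ) * (x * Real.exp (-(r * x))) := by
    intro x _
    rw [show -(r * x) = t * x + (-θ * x) by rw [hr]; ring, Real.exp_add]
    ring
  rw [setIntegral_congr_fun measurableSet_Ioi key, integral_add
      ((integrable_exp' hrpos).const_mul _) ((integrable_x_exp hrpos).const_mul _),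
    integral_const_mul, integral_const_mul, exp_int_one hrpos, exp_int_two hrpos]
  have h1 : θ ≠ 0 := hθ.ne'
  have h2 : θ + 3 ≠ 0 := by linarith
  have h3 : r ≠ 0 := hrpos.ne'
  have h4 : (1 : ℝ) - t / θ ≠ 0 := by
    rw [sub_ne_zero]
    intro h
    apply h3
    field_simp at h
    rw [hr, h, sub_self]
  rw [zpow_neg, show ((2:ℤ)) = ((2:ℕ):ℤ) by norm_num, zpow_natCast]
  rw [hr] at *
  field_simp
  ring
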